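/- Let q = 2^m with m ≥ 3, and let f(x) = x^d be an o-monomial over GF(q) and a in GF(q)*. Then for any pairwise distinct u1, u2, u3 in GF(q), the number of pairs (b,c) in GF(q)* × GF(q) with {u1,u2,u3} ⊆ {a x^d + bx + c : x in GF(q)} equals q(q-4)/8. -/

import Mathlib

/-- A function is 2-to-1 if every element of its image has exactly two preimages. -/
def TwoToOne {F : Type*} (g : F → F) : Prop :=
  ∀ y : F, (∃ x : F, g x = y) → Set.ncard {x : F | g x = y} = 2

set_option maxHeartbeats 4000000 in
theorem stmt_12 {F : Type*} [Field F] [Fintype F] (m d : ℕ) (hm : 3 ≤ m)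
    (hq : Fintype.card F = 2 ^ m)
    (hd : Nat.gcd d (2 ^ m - 1) = 1)
    (h2 : ∀ b : F, b ≠ 0 → TwoToOne (fun x => x ^ d + b * x))
    (a : F) (ha : a ≠ 0)
    (u₁ u₂ u₃ : F) (h12 : u₁ ≠ u₂) (h13 : u₁ ≠ u₃) (h23 : u₂ ≠ u₃) :
    Set.ncard {p : F × F | p.1 ≠ 0 ∧
        ({u₁, u₂, u₃} : Set F) ⊆ {y : F | ∃ x : F, y = a * x ^ d + p.1 * x + p.2}} =
      2 ^ m * (2 ^ m - 4) / 8 := by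
  classical
  have h8 : (8 : ℕ) ≤ 2 ^ m := by
    calc (8:ℕ) = 2 ^ 3 := rfl
    _ ≤ 2 ^ m := Nat.pow_le_pow_right (by norm_num) hm
  -- characteristic 2
  have htwo : (2 : F) = 0 := by
    have h0 := FiniteField.cast_card_eq_zero F
    rw [hq] at h0
    push_cast at h0
    exact pow_eq_zero_iff (by omega) |>.mp h0
  have haddself : ∀ x : F, x + x = 0 := fun x => by linear_combination x * htwo
  have hchar : ∀ x y : F, x + y = 0 → x = y := by
    intro x y h
    linear_combination h - y * htwo
  have hne : ∀ x y : F, x ≠ y → x + y ≠ 0 := fun x y h hxy => h (hchar _ _ hxy)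
  have hd0 : d ≠ 0 := by
    rintro rfl
    rw [Nat.gcd_zero_left] at hd
    omega
  -- x ↦ x^d is bijective
  have hdinj : Function.Injective fun x : F => x ^ d := by
    intro x y hxy
    simp only at hxy
    rcases eq_or_ne x 0 with rfl | hx
    · rcases eq_or_ne y 0 with rfl | hy
      · rfl
      · rw [zero_pow hd0] at hxy
        exact ((hy (pow_eq_zero_iff hd0 |>.mp hxy.symm)).elim)
    · rcases eq_or_ne y 0 with rfl | hy
      · rw [zero_pow hd0] at hxy
        exact ((hx (pow_eq_zero_iff hd0 |>.mp hxy)).elim)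
      · have h1 : (Units.mk0 x hx * (Units.mk0 y hy)⁻¹) ^ d = 1 := by
          rw [← Units.val_eq_one]
          push_cast
          simp only [Units.val_mk0]
          rw [mul_pow, inv_pow, hxy, mul_inv_cancel₀ (pow_ne_zero d hy)]
        have hdvd1 : orderOf (Units.mk0 x hx * (Units.mk0 y hy)⁻¹) ∣ d :=
          orderOf_dvd_of_pow_eq_one h1
        have hdvd2 : orderOf (Units.mk0 x hx * (Units.mk0 y hy)⁻¹) ∣ 2 ^ m - 1 := by
          have := orderOf_dvd_card (G := Fˣ) (x := Units.mk0 x hx * (Units.mk0 y hy)⁻¹)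
          rwa [Fintype.card_units, hq] at this
        have h5 : Units.mk0 x hx * (Units.mk0 y hy)⁻¹ = 1 :=
          orderOf_eq_one_iff.mp (Nat.dvd_one.mp (hd ▸ Nat.dvd_gcd hdvd1 hdvd2))
        have h6 : Units.mk0 x hx = Units.mk0 y hy := by
          rwa [mul_inv_eq_one] at h5
        have := congrArg Units.val h6
        simpa using this
  set ed : F ≃ F := Equiv.ofBijective _ (Finite.injective_iff_bijective.mp hdinj) with hed
  have hedapp : ∀ x : F, ed x = x ^ d := fun _ => rfl
  have hedsymm : ∀ v : F, (ed.symm v) ^ d = v := fun v => ed.apply_symm_apply v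
  -- 2-to-1 in Finset form
  have key2 : ∀ b : F, b ≠ 0 → ∀ v : F, (∃ x : F, a * x ^ d + b * x = v) →
      (Finset.univ.filter fun x : F => a * x ^ d + b * x = v).card = 2 := by
    intro b hb v hex
    obtain ⟨x0, hx0⟩ := hex
    have hb' : b / a ≠ 0 := div_ne_zero hb ha
    have hiff : ∀ x : F, (x ^ d + b / a * x = v / a) ↔ (a * x ^ d + b * x = v) := by
      intro x
      constructor
      · intro h
        field_simp at h
        linear_combination h
      · intro h
        field_simp
        linear_combination h
    have hfib := h2 (b / a) hb' (v / a) ⟨x0, (hiff x0).mpr hx0⟩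
    rw [Set.ncard_eq_toFinset_card', Set.toFinset_setOf] at hfib
    rw [← hfib]
    exact congrArg Finset.card (Finset.filter_congr fun x _ => (hiff x).symm)
  -- s^d = s → s ∈ {0,1}
  have hone : ∀ s : F, s ^ d = s → s = 0 ∨ s = 1 := by
    intro s hs
    by_contra hc
    push_neg at hc
    obtain ⟨hs0, hs1⟩ := hc
    have hfib := h2 1 one_ne_zero 0 ⟨0, by simp [zero_pow hd0]⟩
    rw [Set.ncard_eq_toFinset_card', Set.toFinset_setOf] at hfib
    have hm0 : (0 : F) ∈ Finset.univ.filter fun x : F => (fun x : F => x ^ d + 1 * x) x = 0 := by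
      simp [zero_pow hd0]
    have hm1 : (1 : F) ∈ Finset.univ.filter fun x : F => (fun x : F => x ^ d + 1 * x) x = 0 := by
      simp only [Finset.mem_filter, Finset.mem_univ, true_and]
      show (1 : F) ^ d + 1 * 1 = 0
      rw [one_pow]
      linear_combination htwo
    have hms : s ∈ Finset.univ.filter fun x : F => (fun x : F => x ^ d + 1 * x) x = 0 := by
      simp only [Finset.mem_filter, Finset.mem_univ, true_and]
      show s ^ d + 1 * s = 0
      rw [hs]
      linear_combination s * htwo
    have hsub : ({0, 1, s} : Finset F) ⊆
        Finset.univ.filter fun x : F => (fun x : F => x ^ d + 1 * x) x = 0 := by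
      intro x hx
      simp only [Finset.mem_insert, Finset.mem_singleton] at hx
      rcases hx with rfl | rfl | rfl
      exacts [hm0, hm1, hms]
    have h3 : ({0, 1, s} : Finset F).card = 3 := by
      rw [Finset.card_insert_of_notMem (by simp [Ne.symm hs0]),
        Finset.card_insert_of_notMem (by simp [Ne.symm hs1]), Finset.card_singleton]
    have := Finset.card_le_card hsub
    rw [h3, hfib] at this
    omega
  -- chord-slope injectivity at the point 1
  have hmu : ∀ s t : F, s ≠ 1 → t ≠ 1 → (1 + s ^ d) * (1 + t) = (1 + t ^ d) * (1 + s) →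
      s = t := by
    intro s t hs1 ht1 heq
    by_contra hst
    have h1s : (1 : F) + s ≠ 0 := fun h => hs1 ((hchar 1 s h).symm)
    have h1t : (1 : F) + t ≠ 0 := fun h => ht1 ((hchar 1 t h).symm)
    set b := (1 + s ^ d) / (1 + s) with hb
    have hbne : b ≠ 0 := by
      rw [hb, div_ne_zero_iff]
      refine ⟨fun h => hs1 (hdinj ?_), h1s⟩
      show s ^ d = 1 ^ d
      rw [one_pow]
      exact (hchar _ _ h).symm
    have hbs : b * (1 + s) = 1 + s ^ d := by
      rw [hb, div_mul_cancel₀ _ h1s]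
    have hbt : b * (1 + t) = 1 + t ^ d := by
      rw [hb]
      field_simp
      linear_combination heq
    have hfib := h2 b hbne (1 + b) ⟨1, by simp⟩
    rw [Set.ncard_eq_toFinset_card', Set.toFinset_setOf] at hfib
    have hm1 : (1 : F) ∈ Finset.univ.filter fun x : F => (fun x : F => x ^ d + b * x) x = 1 + b := by
      simp only [Finset.mem_filter, Finset.mem_univ, true_and]
      show (1 : F) ^ d + b * 1 = 1 + b
      rw [one_pow]; ring
    have hmss : s ∈ Finset.univ.filter fun x : F => (fun x : F => x ^ d + b * x) x = 1 + b := by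
      simp only [Finset.mem_filter, Finset.mem_univ, true_and]
      show s ^ d + b * s = 1 + b
      linear_combination -hbs + (b * s - 1) * htwo
    have hmtt : t ∈ Finset.univ.filter fun x : F => (fun x : F => x ^ d + b * x) x = 1 + b := by
      simp only [Finset.mem_filter, Finset.mem_univ, true_and]
      show t ^ d + b * t = 1 + b
      linear_combination -hbt + (b * t - 1) * htwo
    have hsub : ({1, s, t} : Finset F) ⊆
        Finset.univ.filter fun x : F => (fun x : F => x ^ d + b * x) x = 1 + b := by
      intro x hx
      simp only [Finset.mem_insert, Finset.mem_singleton] at hx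
      rcases hx with rfl | rfl | rfl
      exacts [hm1, hmss, hmtt]
    have h3 : ({1, s, t} : Finset F).card = 3 := by
      rw [Finset.card_insert_of_notMem (by simp [Ne.symm hs1, Ne.symm ht1]),
        Finset.card_insert_of_notMem (by simp [hst]), Finset.card_singleton]
    have := Finset.card_le_card hsub
    rw [h3, hfib] at this
    omega

  -- ## Step A: the target as a Finset count
  set A : Finset (F × F) := Finset.univ.filter (fun p : F × F => p.1 ≠ 0 ∧
      (∃ x : F, u₁ = a * x ^ d + p.1 * x + p.2) ∧ (∃ x : F, u₂ = a * x ^ d + p.1 * x + p.2) ∧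
      (∃ x : F, u₃ = a * x ^ d + p.1 * x + p.2)) with hA
  have hgoalA : {p : F × F | p.1 ≠ 0 ∧
      ({u₁, u₂, u₃} : Set F) ⊆ {y : F | ∃ x : F, y = a * x ^ d + p.1 * x + p.2}}.ncard
      = A.card := by
    rw [Set.ncard_eq_toFinset_card', Set.toFinset_setOf]
    congr 1
    ext p
    simp only [Finset.mem_filter, Finset.mem_univ, true_and, hA, Set.insert_subset_iff,
      Set.singleton_subset_iff, Set.mem_setOf_eq]
  -- ## Step B: counting solution quintuples, 8 per good pair
  set S5 : Finset ((F × F) × F × F × F) := Finset.univ.filter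
      (fun v : (F × F) × F × F × F => v.1.1 ≠ 0 ∧
        u₁ = a * v.2.1 ^ d + v.1.1 * v.2.1 + v.1.2 ∧
        u₂ = a * v.2.2.1 ^ d + v.1.1 * v.2.2.1 + v.1.2 ∧
        u₃ = a * v.2.2.2 ^ d + v.1.1 * v.2.2.2 + v.1.2) with hS5
  have hBmap : ∀ v ∈ S5, v.1 ∈ A := by
    intro v hv
    simp only [hS5, Finset.mem_filter, Finset.mem_univ, true_and] at hv
    simp only [hA, Finset.mem_filter, Finset.mem_univ, true_and]
    exact ⟨hv.1, ⟨v.2.1, hv.2.1⟩, ⟨v.2.2.1, hv.2.2.1⟩, ⟨v.2.2.2, hv.2.2.2⟩⟩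
  have hB : S5.card = 8 * A.card := by
    rw [Finset.card_eq_sum_card_fiberwise hBmap]
    have hfib : ∀ p ∈ A, (S5.filter fun v => v.1 = p).card = 8 := by
      intro p hp
      simp only [hA, Finset.mem_filter, Finset.mem_univ, true_and] at hp
      obtain ⟨hbne, hx1, hx2, hx3⟩ := hp
      have hiff1 : ∀ x : F, (u₁ = a * x ^ d + p.1 * x + p.2) ↔
          (a * x ^ d + p.1 * x = u₁ + p.2) := by
        intro x
        constructor
        · intro h; linear_combination -h - p.2 * htwo
        · intro h; linear_combination -h - p.2 * htwo
      have hiff2 : ∀ x : F, (u₂ = a * x ^ d + p.1 * x + p.2) ↔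
          (a * x ^ d + p.1 * x = u₂ + p.2) := by
        intro x
        constructor
        · intro h; linear_combination -h - p.2 * htwo
        · intro h; linear_combination -h - p.2 * htwo
      have hiff3 : ∀ x : F, (u₃ = a * x ^ d + p.1 * x + p.2) ↔
          (a * x ^ d + p.1 * x = u₃ + p.2) := by
        intro x
        constructor
        · intro h; linear_combination -h - p.2 * htwo
        · intro h; linear_combination -h - p.2 * htwo
      have hbij : (S5.filter fun v => v.1 = p).card =
          (Finset.univ.filter fun w : F × F × F =>
            (u₁ = a * w.1 ^ d + p.1 * w.1 + p.2) ∧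
            (u₂ = a * w.2.1 ^ d + p.1 * w.2.1 + p.2) ∧
            (u₃ = a * w.2.2 ^ d + p.1 * w.2.2 + p.2)).card := by
        apply Finset.card_nbij' (fun v => v.2) (fun w => (p, w))
        · intro v hv
          simp only [Finset.mem_coe, Finset.mem_filter, Finset.mem_univ, true_and, hS5] at hv ⊢
          obtain ⟨⟨_, h1, h2, h3⟩, hvp⟩ := hv
          rw [hvp] at h1 h2 h3
          exact ⟨h1, h2, h3⟩
        · intro w hw
          simp only [Finset.mem_coe, Finset.mem_filter, Finset.mem_univ, true_and, hS5] at hw ⊢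
          exact ⟨⟨hbne, hw.1, hw.2.1, hw.2.2⟩, trivial⟩
        · intro v hv
          simp only [Finset.mem_coe, Finset.mem_filter, hS5] at hv
          exact Prod.ext hv.2.symm rfl
        · intro w hw
          rfl
      rw [hbij]
      have hsplit : (Finset.univ.filter fun w : F × F × F =>
            (u₁ = a * w.1 ^ d + p.1 * w.1 + p.2) ∧
            (u₂ = a * w.2.1 ^ d + p.1 * w.2.1 + p.2) ∧
            (u₃ = a * w.2.2 ^ d + p.1 * w.2.2 + p.2)) =
          (Finset.univ.filter fun x : F => u₁ = a * x ^ d + p.1 * x + p.2) ×ˢ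
          ((Finset.univ.filter fun x : F => u₂ = a * x ^ d + p.1 * x + p.2) ×ˢ
           (Finset.univ.filter fun x : F => u₃ = a * x ^ d + p.1 * x + p.2)) := by
        ext w
        simp only [Finset.mem_filter, Finset.mem_univ, true_and, Finset.mem_product]
      rw [hsplit, Finset.card_product, Finset.card_product]
      have hc1 : (Finset.univ.filter fun x : F => u₁ = a * x ^ d + p.1 * x + p.2).card = 2 := by
        rw [Finset.filter_congr (fun x _ => hiff1 x)]
        obtain ⟨w, hw⟩ := hx1
        exact key2 p.1 hbne (u₁ + p.2) ⟨w, (hiff1 w).mp hw⟩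
      have hc2 : (Finset.univ.filter fun x : F => u₂ = a * x ^ d + p.1 * x + p.2).card = 2 := by
        rw [Finset.filter_congr (fun x _ => hiff2 x)]
        obtain ⟨w, hw⟩ := hx2
        exact key2 p.1 hbne (u₂ + p.2) ⟨w, (hiff2 w).mp hw⟩
      have hc3 : (Finset.univ.filter fun x : F => u₃ = a * x ^ d + p.1 * x + p.2).card = 2 := by
        rw [Finset.filter_congr (fun x _ => hiff3 x)]
        obtain ⟨w, hw⟩ := hx3
        exact key2 p.1 hbne (u₃ + p.2) ⟨w, (hiff3 w).mp hw⟩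
      rw [hc1, hc2, hc3]
    calc ∑ p ∈ A, (S5.filter fun v => v.1 = p).card = ∑ _p ∈ A, 8 :=
          Finset.sum_congr rfl hfib
      _ = 8 * A.card := by rw [Finset.sum_const, smul_eq_mul, mul_comm]
  -- ## Step C: forget c
  set S4 : Finset (F × F × F × F) := Finset.univ.filter
      (fun v : F × F × F × F => v.1 ≠ 0 ∧
        u₁ + (a * v.2.1 ^ d + v.1 * v.2.1) = u₂ + (a * v.2.2.1 ^ d + v.1 * v.2.2.1) ∧
        u₁ + (a * v.2.1 ^ d + v.1 * v.2.1) = u₃ + (a * v.2.2.2 ^ d + v.1 * v.2.2.2)) with hS4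
  have hC : S5.card = S4.card := by
    apply Finset.card_nbij' (fun v => (v.1.1, v.2))
      (fun w => ((w.1, u₁ + (a * w.2.1 ^ d + w.1 * w.2.1)), w.2))
    · intro v hv
      simp only [Finset.mem_coe, hS5, hS4, Finset.mem_filter, Finset.mem_univ, true_and] at hv ⊢
      obtain ⟨hb, h1, h2, h3⟩ := hv
      refine ⟨hb, ?_, ?_⟩
      · linear_combination h1 - h2 + (a * v.2.1 ^ d + v.1.1 * v.2.1 - a * v.2.2.1 ^ d -
          v.1.1 * v.2.2.1) * htwo
      · linear_combination h1 - h3 + (a * v.2.1 ^ d + v.1.1 * v.2.1 - a * v.2.2.2 ^ d -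
          v.1.1 * v.2.2.2) * htwo
    · intro w hw
      simp only [Finset.mem_coe, hS5, hS4, Finset.mem_filter, Finset.mem_univ, true_and] at hw ⊢
      obtain ⟨hb, hE1, hE2⟩ := hw
      refine ⟨hb, ?_, ?_, ?_⟩
      · linear_combination (-(a * w.2.1 ^ d) - w.1 * w.2.1) * htwo
      · linear_combination -hE1 - (a * w.2.2.1 ^ d + w.1 * w.2.2.1) * htwo
      · linear_combination -hE2 - (a * w.2.2.2 ^ d + w.1 * w.2.2.2) * htwo
    · intro v hv
      simp only [Finset.mem_coe, hS5, Finset.mem_filter, Finset.mem_univ, true_and] at hv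
      obtain ⟨hb, h1, h2, h3⟩ := hv
      have hc : u₁ + (a * v.2.1 ^ d + v.1.1 * v.2.1) = v.1.2 := by
        linear_combination h1 + (a * v.2.1 ^ d + v.1.1 * v.2.1) * htwo
      exact Prod.ext (Prod.ext rfl hc) rfl
    · intro w hw
      rfl
  -- ## Step D: free b, and split off b = 0
  set S4' : Finset (F × F × F × F) := Finset.univ.filter
      (fun v : F × F × F × F =>
        u₁ + (a * v.2.1 ^ d + v.1 * v.2.1) = u₂ + (a * v.2.2.1 ^ d + v.1 * v.2.2.1) ∧
        u₁ + (a * v.2.1 ^ d + v.1 * v.2.1) = u₃ + (a * v.2.2.2 ^ d + v.1 * v.2.2.2)) with hS4'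
  set S0 : Finset (F × F × F × F) := Finset.univ.filter
      (fun v : F × F × F × F => v.1 = 0 ∧
        u₁ + (a * v.2.1 ^ d + v.1 * v.2.1) = u₂ + (a * v.2.2.1 ^ d + v.1 * v.2.2.1) ∧
        u₁ + (a * v.2.1 ^ d + v.1 * v.2.1) = u₃ + (a * v.2.2.2 ^ d + v.1 * v.2.2.2)) with hS0
  have hD : S4'.card = S4.card + S0.card := by
    rw [← Finset.card_filter_add_card_filter_not (s := S4') (p := fun v => v.1 ≠ 0)]
    congr 1
    · congr 1
      ext v
      simp only [hS4', hS4, Finset.mem_filter, Finset.mem_univ, true_and]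
      tauto
    · congr 1
      ext v
      simp only [hS4', hS0, Finset.mem_filter, Finset.mem_univ, true_and, not_not]
      tauto
  -- ## Step E: the b = 0 slice has exactly q elements
  have hEcard : S0.card = Fintype.card F := by
    rw [← Finset.card_univ]
    apply Finset.card_nbij' (fun v => v.2.1)
      (fun x => (0, x, ed.symm (x ^ d + (u₁ + u₂) / a), ed.symm (x ^ d + (u₁ + u₃) / a)))
    · intro v _
      exact Finset.mem_univ _
    · intro x _
      simp only [Finset.mem_coe, hS0, Finset.mem_filter, Finset.mem_univ, true_and]
      refine ⟨?_, ?_⟩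
      · rw [hedsymm]
        have hmul : a * (x ^ d + (u₁ + u₂) / a) = a * x ^ d + (u₁ + u₂) := by
          rw [mul_add, mul_div_cancel₀ _ ha]
        linear_combination -hmul - u₂ * htwo
      · rw [hedsymm]
        have hmul : a * (x ^ d + (u₁ + u₃) / a) = a * x ^ d + (u₁ + u₃) := by
          rw [mul_add, mul_div_cancel₀ _ ha]
        linear_combination -hmul - u₃ * htwo
    · intro v hv
      simp only [Finset.mem_coe, hS0, Finset.mem_filter, Finset.mem_univ, true_and] at hv
      obtain ⟨hb0, hE1, hE2⟩ := hv
      rw [hb0] at hE1 hE2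
      have hy : ed.symm (v.2.1 ^ d + (u₁ + u₂) / a) = v.2.2.1 := by
        rw [Equiv.symm_apply_eq]
        have h' : a * v.2.2.1 ^ d = a * v.2.1 ^ d + (u₁ + u₂) := by
          linear_combination -hE1 - u₂ * htwo
        show v.2.1 ^ d + (u₁ + u₂) / a = v.2.2.1 ^ d
        field_simp
        first
        | linear_combination h'
        | linear_combination -h'
      have hz : ed.symm (v.2.1 ^ d + (u₁ + u₃) / a) = v.2.2.2 := by
        rw [Equiv.symm_apply_eq]
        have h' : a * v.2.2.2 ^ d = a * v.2.1 ^ d + (u₁ + u₃) := by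
          linear_combination -hE2 - u₃ * htwo
        show v.2.1 ^ d + (u₁ + u₃) / a = v.2.2.2 ^ d
        field_simp
        first
        | linear_combination h'
        | linear_combination -h'
      exact Prod.ext hb0.symm (Prod.ext rfl (Prod.ext hy hz))
    · intro x _
      rfl
  -- ## Step F: eliminate b
  set S3 : Finset (F × F × F) := Finset.univ.filter
      (fun w : F × F × F => w.1 ≠ w.2.1 ∧ w.1 ≠ w.2.2 ∧
        a * (w.1 ^ d * (w.2.1 + w.2.2) + w.2.1 ^ d * (w.1 + w.2.2) + w.2.2 ^ d * (w.1 + w.2.1))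
          + (u₂ + u₃) * w.1 + (u₁ + u₃) * w.2.1 + (u₁ + u₂) * w.2.2 = 0) with hS3
  have hFcard : S4'.card = S3.card := by
    apply Finset.card_nbij' (fun v => v.2)
      (fun w => ((u₁ + u₂ + a * w.1 ^ d + a * w.2.1 ^ d) / (w.1 + w.2.1), w))
    · intro v hv
      simp only [Finset.mem_coe, hS4', hS3, Finset.mem_filter, Finset.mem_univ, true_and] at hv ⊢
      obtain ⟨hE1, hE2⟩ := hv
      have hxy : v.2.1 ≠ v.2.2.1 := by
        intro h
        apply h12
        rw [h] at hE1
        exact add_right_cancel hE1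
      have hxz : v.2.1 ≠ v.2.2.2 := by
        intro h
        apply h13
        rw [h] at hE2
        exact add_right_cancel hE2
      refine ⟨hxy, hxz, ?_⟩
      linear_combination (v.2.1 + v.2.2.2) * hE1 + (v.2.1 + v.2.2.1) * hE2 +
        (u₂ * v.2.2.2 + u₃ * v.2.2.1 + u₃ * v.2.1 + u₂ * v.2.1 - u₁ * v.2.1 +
         v.1 * v.2.2.1 * v.2.2.2 - v.1 * v.2.1 ^ 2 + a * v.2.2.1 ^ d * v.2.2.2 +
         a * v.2.2.2 ^ d * v.2.2.1 + a * v.2.2.2 ^ d * v.2.1 + a * v.2.2.1 ^ d * v.2.1 -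
         a * v.2.1 ^ d * v.2.1) * htwo
    · intro w hw
      simp only [Finset.mem_coe, hS4', hS3, Finset.mem_filter, Finset.mem_univ, true_and] at hw ⊢
      obtain ⟨hxy, hxz, hGw⟩ := hw
      have hxyne : w.1 + w.2.1 ≠ 0 := hne _ _ hxy
      have hbmul : (u₁ + u₂ + a * w.1 ^ d + a * w.2.1 ^ d) / (w.1 + w.2.1) * (w.1 + w.2.1) =
          u₁ + u₂ + a * w.1 ^ d + a * w.2.1 ^ d := div_mul_cancel₀ _ hxyne
      constructor
      · linear_combination hbmul + (u₁ + a * w.1 ^ d -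
          (u₁ + u₂ + a * w.1 ^ d + a * w.2.1 ^ d) / (w.1 + w.2.1) * w.2.1) * htwo
      · apply mul_left_cancel₀ hxyne
        linear_combination (w.1 + w.2.2) * hbmul + hGw +
          (-(u₃ * w.2.1) - u₃ * w.1 + u₁ * w.1 -
           (u₁ + u₂ + a * w.1 ^ d + a * w.2.1 ^ d) / (w.1 + w.2.1) * w.2.1 * w.2.2 -
           (u₁ + u₂ + a * w.1 ^ d + a * w.2.1 ^ d) / (w.1 + w.2.1) * w.1 * w.2.2 -
           a * w.2.2 ^ d * w.2.1 - a * w.2.2 ^ d * w.1 + a * w.1 ^ d * w.1) * htwo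
    · intro v hv
      simp only [Finset.mem_coe, hS4', Finset.mem_filter, Finset.mem_univ, true_and] at hv
      obtain ⟨hE1, hE2⟩ := hv
      have hxy : v.2.1 ≠ v.2.2.1 := by
        intro h
        apply h12
        rw [h] at hE1
        exact add_right_cancel hE1
      have hxyne : v.2.1 + v.2.2.1 ≠ 0 := hne _ _ hxy
      have hbv : (u₁ + u₂ + a * v.2.1 ^ d + a * v.2.2.1 ^ d) / (v.2.1 + v.2.2.1) = v.1 := by
        rw [div_eq_iff hxyne]
        linear_combination hE1 + (u₂ + a * v.2.2.1 ^ d - v.1 * v.2.1) * htwo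
      exact Prod.ext hbv rfl
    · intro w hw
      rfl
  -- ## Step G: add back the diagonal
  set S3' : Finset (F × F × F) := Finset.univ.filter
      (fun w : F × F × F =>
        a * (w.1 ^ d * (w.2.1 + w.2.2) + w.2.1 ^ d * (w.1 + w.2.2) + w.2.2 ^ d * (w.1 + w.2.1))
          + (u₂ + u₃) * w.1 + (u₁ + u₃) * w.2.1 + (u₁ + u₂) * w.2.2 = 0) with hS3'
  have hGcard : S3'.card = S3.card + Fintype.card F := by
    rw [← Finset.card_filter_add_card_filter_not (s := S3')
      (p := fun w => w.1 ≠ w.2.1 ∧ w.1 ≠ w.2.2)]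
    congr 1
    · congr 1
      ext w
      simp only [hS3', hS3, Finset.mem_filter, Finset.mem_univ, true_and]
      tauto
    · rw [← Finset.card_univ]
      apply Finset.card_nbij' (fun w => w.1) (fun x => (x, x, x))
      · intro w _
        exact Finset.mem_univ _
      · intro x _
        simp only [Finset.mem_coe, hS3', Finset.mem_filter, Finset.mem_univ, true_and]
        constructor
        · linear_combination (3 * a * x ^ d * x + (u₁ + u₂ + u₃) * x) * htwo
        · simp
      · intro w hw
        simp only [Finset.mem_coe, hS3', Finset.mem_filter, Finset.mem_univ, true_and] at hw
        obtain ⟨hGw, hnd⟩ := hw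
        rcases not_and_or.mp hnd with h | h
        · push_neg at h
          rw [← h] at hGw
          have hE : (u₁ + u₂) * (w.1 + w.2.2) = 0 := by
            linear_combination hGw - (a * w.1 ^ d * (w.1 + w.2.2) + a * w.2.2 ^ d * w.1 +
              u₃ * w.1) * htwo
          rcases mul_eq_zero.mp hE with h' | h'
          · exact absurd h' (hne _ _ h12)
          · exact Prod.ext rfl (Prod.ext h (hchar _ _ h'))
        · push_neg at h
          rw [← h] at hGw
          have hE : (u₁ + u₃) * (w.1 + w.2.1) = 0 := by
            linear_combination hGw - (a * w.1 ^ d * (w.1 + w.2.1) + a * w.2.1 ^ d * w.1 +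
              u₂ * w.1) * htwo
          rcases mul_eq_zero.mp hE with h' | h'
          · exact absurd h' (hne _ _ h13)
          · exact Prod.ext rfl (Prod.ext (hchar _ _ h') h)
      · intro x _
        rfl

  -- basic nonvanishing facts
  have heps : u₁ + u₂ ≠ 0 := hne _ _ h12
  have hdel : u₁ + u₃ ≠ 0 := hne _ _ h13
  have hgam : u₂ + u₃ ≠ 0 := hne _ _ h23
  have hde : (u₁ + u₃) + (u₁ + u₂) ≠ 0 := by
    intro h
    exact h23 (add_left_cancel (hchar _ _ h)).symm
  -- ## Step H: split off the x = 0 slice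
  set S30 : Finset (F × F) := Finset.univ.filter
      (fun p : F × F => a * (p.1 ^ d * p.2 + p.2 ^ d * p.1)
        + (u₁ + u₃) * p.1 + (u₁ + u₂) * p.2 = 0) with hS30
  have hHcard : S3'.card = S30.card + (S3'.filter fun w => w.1 ≠ 0).card := by
    rw [← Finset.card_filter_add_card_filter_not (s := S3')
      (p := fun w => w.1 ≠ 0), Nat.add_comm]
    congr 1
    apply Finset.card_nbij' (fun w => w.2) (fun p => ((0 : F), p))
    · intro w hw
      simp only [Finset.mem_coe, hS3', hS30, Finset.mem_filter, Finset.mem_univ, true_and, not_not] at hw ⊢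
      obtain ⟨hGw, h0⟩ := hw
      rw [h0, zero_pow hd0] at hGw
      linear_combination hGw
    · intro p hp
      simp only [Finset.mem_coe, hS3', hS30, Finset.mem_filter, Finset.mem_univ, true_and, not_not] at hp ⊢
      refine ⟨?_, trivial⟩
      rw [zero_pow hd0]
      linear_combination hp
    · intro w hw
      simp only [Finset.mem_coe, hS3', Finset.mem_filter, not_not] at hw
      exact Prod.ext hw.2.symm rfl
    · intro p hp
      rfl
  -- ## Step I: the x = 0 slice has q - 2 points
  set SS : Finset F := Finset.univ.filter
      (fun s : F => s ≠ 0 ∧ s ≠ 1 ∧ (u₁ + u₃) + (u₁ + u₂) * s ≠ 0) with hSS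
  have hI1 : S30.card = 1 + SS.card := by
    rw [← Finset.card_filter_add_card_filter_not (s := S30)
      (p := fun p => p.1 ≠ 0), Nat.add_comm]
    congr 1
    · -- the y = 0 part is just {(0,0)}
      have hsingle : (S30.filter fun p => ¬p.1 ≠ 0) = {((0 : F), (0 : F))} := by
        ext p
        simp only [hS30, Finset.mem_filter, Finset.mem_univ, true_and, not_not,
          Finset.mem_singleton]
        constructor
        · rintro ⟨hGp, h0⟩
          rw [h0, zero_pow hd0] at hGp
          have hz : (u₁ + u₂) * p.2 = 0 := by
            linear_combination hGp
          rcases mul_eq_zero.mp hz with h' | h'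
          · exact absurd h' heps
          · exact Prod.ext h0 h'
        · rintro rfl
          refine ⟨?_, rfl⟩
          simp [zero_pow hd0]
      rw [hsingle, Finset.card_singleton]
    · -- the y ≠ 0 part is parametrised by s ∉ {0, 1, (u₁+u₃)/(u₁+u₂)}
      have hkey : ∀ p : F × F, p.1 ≠ 0 →
          (a * (p.1 ^ d * p.2 + p.2 ^ d * p.1) + (u₁ + u₃) * p.1 + (u₁ + u₂) * p.2 = 0) →
          (p.2 * p.1⁻¹ ≠ 0 ∧ p.2 * p.1⁻¹ ≠ 1 ∧
            (u₁ + u₃) + (u₁ + u₂) * (p.2 * p.1⁻¹) ≠ 0 ∧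
            a * p.1 ^ d * ((p.2 * p.1⁻¹) + (p.2 * p.1⁻¹) ^ d) =
              (u₁ + u₃) + (u₁ + u₂) * (p.2 * p.1⁻¹)) := by
        rintro ⟨y, z⟩ hy hGp
        simp only at hGp ⊢
        have hyd : y ^ d ≠ 0 := pow_ne_zero d hy
        have hz : z ≠ 0 := by
          rintro rfl
          rw [zero_pow hd0] at hGp
          have : (u₁ + u₃) * y = 0 := by linear_combination hGp
          rcases mul_eq_zero.mp this with h' | h'
          · exact hdel h'
          · exact hy h'
        have hbr : a * y ^ d * (z * y⁻¹ + (z * y⁻¹) ^ d) =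
            (u₁ + u₃) + (u₁ + u₂) * (z * y⁻¹) := by
          rw [mul_pow, inv_pow]
          have hI : y * y⁻¹ = 1 := mul_inv_cancel₀ hy
          have hJ : y ^ d * (y ^ d)⁻¹ = 1 := mul_inv_cancel₀ hyd
          apply mul_left_cancel₀ hy
          linear_combination hGp + (a * y ^ d * z - (u₁ + u₂) * z) * hI + a * y * z ^ d * hJ -
            (y * (u₁ + u₃) + (u₁ + u₂) * z) * htwo
        have hs0 : z * y⁻¹ ≠ 0 := mul_ne_zero hz (inv_ne_zero hy)
        have hs1 : z * y⁻¹ ≠ 1 := by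
          intro h1
          rw [h1] at hbr
          rw [one_pow] at hbr
          have : a * y ^ d * (1 + 1) = 0 := by
            rw [show (1:F) + 1 = 0 from haddself 1, mul_zero]
          rw [this] at hbr
          exact hde (by linear_combination -hbr)
        refine ⟨hs0, hs1, ?_, hbr⟩
        intro hcon
        rw [hcon] at hbr
        rcases mul_eq_zero.mp hbr with h' | h'
        · exact absurd (mul_eq_zero.mp h') (by push_neg; exact ⟨ha, hyd⟩)
        · have hss : (z * y⁻¹) ^ d = z * y⁻¹ := (hchar _ _ h').symm
          rcases hone _ hss with h'' | h''
          · exact hs0 h''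
          · exact hs1 h''
      apply Finset.card_nbij' (fun p => p.2 * p.1⁻¹)
        (fun s => (ed.symm (((u₁ + u₃) + (u₁ + u₂) * s) / (a * (s + s ^ d))),
          s * ed.symm (((u₁ + u₃) + (u₁ + u₂) * s) / (a * (s + s ^ d)))))
      · intro p hp
        simp only [Finset.mem_coe, hS30, Finset.mem_filter, Finset.mem_univ, true_and] at hp
        obtain ⟨hGp, hy⟩ := hp
        obtain ⟨hs0, hs1, hsne, hbr⟩ := hkey p hy hGp
        simp only [Finset.mem_coe, hSS, Finset.mem_filter, Finset.mem_univ, true_and]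
        exact ⟨hs0, hs1, hsne⟩
      · intro s hs
        simp only [Finset.mem_coe, hSS, Finset.mem_filter, Finset.mem_univ, true_and] at hs
        obtain ⟨hs0, hs1, hsne⟩ := hs
        have hss : s + s ^ d ≠ 0 := by
          intro h
          rcases hone s ((hchar _ _ h).symm) with h' | h'
          · exact hs0 h'
          · exact hs1 h'
        have hden : a * (s + s ^ d) ≠ 0 := mul_ne_zero ha hss
        have hQ : (ed.symm (((u₁ + u₃) + (u₁ + u₂) * s) / (a * (s + s ^ d)))) ^ d =
            ((u₁ + u₃) + (u₁ + u₂) * s) / (a * (s + s ^ d)) := hedsymm _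
        have hyne : ed.symm (((u₁ + u₃) + (u₁ + u₂) * s) / (a * (s + s ^ d))) ≠ 0 := by
          intro h0
          rw [h0, zero_pow hd0] at hQ
          exact hsne (by
            have := hQ.symm
            rw [div_eq_zero_iff] at this
            rcases this with h' | h'
            · exact h'
            · exact absurd h' hden)
        simp only [Finset.mem_coe, hS30, Finset.mem_filter, Finset.mem_univ, true_and]
        refine ⟨?_, hyne⟩
        rw [mul_pow, hQ]
        have hclear : a * (((u₁ + u₃) + (u₁ + u₂) * s) / (a * (s + s ^ d))) * (s + s ^ d) =
            (u₁ + u₃) + (u₁ + u₂) * s := by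
          field_simp
        set Y := ed.symm (((u₁ + u₃) + (u₁ + u₂) * s) / (a * (s + s ^ d))) with hY
        rw [← hQ]
        -- goal: a * (Y^d * (s*Y) + (s^d * Y^d) * Y) + (u₁+u₃)*Y + (u₁+u₂)*(s*Y) = 0
        have hbr2 : a * Y ^ d * (s + s ^ d) = (u₁ + u₃) + (u₁ + u₂) * s := by
          rw [hQ]
          exact hclear
        linear_combination Y * hbr2 + ((u₁ + u₃) * Y + (u₁ + u₂) * s * Y) * htwo
      · intro p hp
        simp only [Finset.mem_coe, hS30, Finset.mem_filter, Finset.mem_univ, true_and] at hp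
        obtain ⟨hGp, hy⟩ := hp
        obtain ⟨hs0, hs1, hsne, hbr⟩ := hkey p hy hGp
        have hss : (p.2 * p.1⁻¹) + (p.2 * p.1⁻¹) ^ d ≠ 0 := by
          intro h
          rcases hone _ ((hchar _ _ h).symm) with h' | h'
          · exact hs0 h'
          · exact hs1 h'
        have hyval : ed.symm (((u₁ + u₃) + (u₁ + u₂) * (p.2 * p.1⁻¹)) /
            (a * ((p.2 * p.1⁻¹) + (p.2 * p.1⁻¹) ^ d))) = p.1 := by
          rw [Equiv.symm_apply_eq]
          show _ = p.1 ^ d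
          rw [div_eq_iff (mul_ne_zero ha hss)]
          linear_combination -hbr
        dsimp only
        rw [hyval]
        have hzval : p.2 * p.1⁻¹ * p.1 = p.2 := by
          field_simp
        exact Prod.ext rfl hzval
      · intro s hs
        simp only [Finset.mem_coe, hSS, Finset.mem_filter, Finset.mem_univ, true_and] at hs
        obtain ⟨hs0, hs1, hsne⟩ := hs
        have hss : s + s ^ d ≠ 0 := by
          intro h
          rcases hone s ((hchar _ _ h).symm) with h' | h'
          · exact hs0 h'
          · exact hs1 h'
        have hden : a * (s + s ^ d) ≠ 0 := mul_ne_zero ha hss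
        have hQ : (ed.symm (((u₁ + u₃) + (u₁ + u₂) * s) / (a * (s + s ^ d)))) ^ d =
            ((u₁ + u₃) + (u₁ + u₂) * s) / (a * (s + s ^ d)) := hedsymm _
        have hyne : ed.symm (((u₁ + u₃) + (u₁ + u₂) * s) / (a * (s + s ^ d))) ≠ 0 := by
          intro h0
          rw [h0, zero_pow hd0] at hQ
          exact hsne (by
            have := hQ.symm
            rw [div_eq_zero_iff] at this
            rcases this with h' | h'
            · exact h'
            · exact absurd h' hden)
        show s * _ * _⁻¹ = s
        rw [mul_assoc, mul_inv_cancel₀ hyne, mul_one]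
  have hI2 : SS.card + 3 = Fintype.card F := by
    have hcompl : (Finset.univ.filter fun s : F =>
        ¬(s ≠ 0 ∧ s ≠ 1 ∧ (u₁ + u₃) + (u₁ + u₂) * s ≠ 0)) =
        {(0 : F), (1 : F), (u₁ + u₃) / (u₁ + u₂)} := by
      ext s
      simp only [Finset.mem_filter, Finset.mem_univ, true_and, Finset.mem_insert,
        Finset.mem_singleton, not_and_or, not_not]
      constructor
      · rintro (h | h | h)
        · exact Or.inl h
        · exact Or.inr (Or.inl h)
        · refine Or.inr (Or.inr ?_)
          rw [eq_div_iff heps]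
          linear_combination h - (u₁ + u₃) * htwo
      · rintro (rfl | rfl | rfl)
        · exact Or.inl rfl
        · exact Or.inr (Or.inl rfl)
        · refine Or.inr (Or.inr ?_)
          have h' : (u₁ + u₂) * ((u₁ + u₃) / (u₁ + u₂)) = u₁ + u₃ := by
            field_simp
          rw [h']
          exact haddself _
    have h01 : (0 : F) ∉ ({1, (u₁ + u₃) / (u₁ + u₂)} : Finset F) := by
      simp only [Finset.mem_insert, Finset.mem_singleton]
      push_neg
      refine ⟨zero_ne_one, ?_⟩
      intro h
      have h2' := h.symm
      rw [div_eq_zero_iff] at h2'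
      rcases h2' with h' | h'
      · exact hdel h'
      · exact heps h'
    have h1x : (1 : F) ∉ ({(u₁ + u₃) / (u₁ + u₂)} : Finset F) := by
      simp only [Finset.mem_singleton]
      intro h
      have h' : u₁ + u₂ = u₁ + u₃ := by
        rw [eq_div_iff heps] at h
        linear_combination h
      exact h23 (add_left_cancel h')
    have hd3 : ({(0 : F), (1 : F), (u₁ + u₃) / (u₁ + u₂)} : Finset F).card = 3 := by
      rw [Finset.card_insert_of_notMem h01, Finset.card_insert_of_notMem h1x,
        Finset.card_singleton]
    have hsplit := Finset.card_filter_add_card_filter_not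
      (s := (Finset.univ : Finset F))
      (p := fun s : F => s ≠ 0 ∧ s ≠ 1 ∧ (u₁ + u₃) + (u₁ + u₂) * s ≠ 0)
    rw [Finset.card_univ, hcompl, hd3] at hsplit
    rw [hSS]
    exact hsplit

  -- ## Step J: count the x ≠ 0 part via the chart (x, s*x, t*x)
  have hPhiChar : ∀ s t : F, (s + t + s ^ d + t ^ d + s ^ d * t + s * t ^ d) = 0 → s = 1 ∨ t = 1 ∨ s = t := by
    intro s t h
    by_cases hs : s = 1
    · exact Or.inl hs
    by_cases ht : t = 1
    · exact Or.inr (Or.inl ht)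
    refine Or.inr (Or.inr ?_)
    apply hmu s t hs ht
    linear_combination h - (s + t ^ d + s * t ^ d) * htwo
  have hPhi1t : ∀ t : F, ((1:F) + t + (1:F) ^ d + t ^ d + (1:F) ^ d * t + (1:F) * t ^ d) = 0 := by
    intro t
    rw [one_pow]
    linear_combination (1 + t + t ^ d) * htwo
  have hPhit1 : ∀ s : F, (s + (1:F) + s ^ d + (1:F) ^ d + s ^ d * (1:F) + s * (1:F) ^ d) = 0 := by
    intro s
    rw [one_pow]
    linear_combination (1 + s + s ^ d) * htwo
  have hPhiss : ∀ s : F, (s + s + s ^ d + s ^ d + s ^ d * s + s * s ^ d) = 0 := by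
    intro s
    linear_combination (s + s ^ d + s * s ^ d) * htwo
  have hR11 : ((u₂ + u₃) + (u₁ + u₃) * (1:F) + (u₁ + u₂) * (1:F)) = 0 := by
    linear_combination (u₁ + u₂ + u₃) * htwo
  have hZL1 : ∀ s t : F, (s + t + s ^ d + t ^ d + s ^ d * t + s * t ^ d) = 0 → ((u₂ + u₃) + (u₁ + u₃) * s + (u₁ + u₂) * t) = 0 → s = 1 ∧ t = 1 := by
    intro s t hP hR
    rcases hPhiChar s t hP with h | h | h
    · subst h
      refine ⟨rfl, ?_⟩
      have ht' : (u₁ + u₂) * t = (u₁ + u₂) * 1 := by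
        rw [mul_one]
        linear_combination hR - (u₁ + u₂ + u₃) * htwo
      exact mul_left_cancel₀ heps ht'
    · subst h
      refine ⟨?_, rfl⟩
      have hs' : (u₁ + u₃) * s = (u₁ + u₃) * 1 := by
        rw [mul_one]
        linear_combination hR - (u₁ + u₂ + u₃) * htwo
      exact mul_left_cancel₀ hdel hs'
    · subst h
      have hs' : (u₂ + u₃) * s = (u₂ + u₃) * 1 := by
        rw [mul_one]
        linear_combination hR - (u₁ * s + (u₂ + u₃)) * htwo
      have hss1 := mul_left_cancel₀ hgam hs'
      exact ⟨hss1, hss1⟩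
  have hJ : (S3'.filter fun w => w.1 ≠ 0).card =
      ∑ st ∈ (Finset.univ : Finset (F × F)),
        (if (st.1 + st.2 + st.1 ^ d + st.2 ^ d + st.1 ^ d * st.2 + st.1 * st.2 ^ d) = 0 then (if ((u₂ + u₃) + (u₁ + u₃) * st.1 + (u₁ + u₂) * st.2) = 0 then Fintype.card F - 1 else 0)
         else (if ((u₂ + u₃) + (u₁ + u₃) * st.1 + (u₁ + u₂) * st.2) = 0 then 0 else 1)) := by
    rw [Finset.card_eq_sum_card_fiberwise
      (f := fun w : F × F × F => (w.2.1 * w.1⁻¹, w.2.2 * w.1⁻¹))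
      (t := (Finset.univ : Finset (F × F))) (fun _ _ => Finset.mem_univ _)]
    apply Finset.sum_congr rfl
    intro st _
    obtain ⟨s, t⟩ := st
    dsimp only
    have hfibx : ((S3'.filter fun w => w.1 ≠ 0).filter
        (fun w => (w.2.1 * w.1⁻¹, w.2.2 * w.1⁻¹) = (s, t))).card =
        (Finset.univ.filter fun x : F => x ≠ 0 ∧
          a * x ^ d * (s + t + s ^ d + t ^ d + s ^ d * t + s * t ^ d) = ((u₂ + u₃) + (u₁ + u₃) * s + (u₁ + u₂) * t)).card := by
      apply Finset.card_nbij' (fun w => w.1) (fun x => (x, s * x, t * x))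
      · intro w hw
        simp only [Finset.mem_coe, hS3', Finset.mem_filter, Finset.mem_univ, true_and, Prod.mk.injEq] at hw ⊢
        obtain ⟨⟨hGw, hx⟩, hs, ht⟩ := hw
        refine ⟨hx, ?_⟩
        rw [← div_eq_mul_inv, div_eq_iff hx] at hs ht
        rw [hs, ht] at hGw
        rw [mul_pow, mul_pow] at hGw
        have hbr : w.1 * (a * w.1 ^ d * (s + t + s ^ d + t ^ d + s ^ d * t + s * t ^ d) + ((u₂ + u₃) + (u₁ + u₃) * s + (u₁ + u₂) * t)) = 0 := by
          linear_combination hGw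
        rcases mul_eq_zero.mp hbr with h' | h'
        · exact absurd h' hx
        · linear_combination h' - ((u₂ + u₃) + (u₁ + u₃) * s + (u₁ + u₂) * t) * htwo
      · intro x hx
        simp only [Finset.mem_coe, Finset.mem_filter, Finset.mem_univ, true_and] at hx
        obtain ⟨hx0, heq⟩ := hx
        simp only [Finset.mem_coe, hS3', Finset.mem_filter, Finset.mem_univ, true_and, Prod.mk.injEq]
        refine ⟨⟨?_, hx0⟩, ?_, ?_⟩
        · rw [mul_pow, mul_pow]
          linear_combination x * heq + x * ((u₂ + u₃) + (u₁ + u₃) * s + (u₁ + u₂) * t) * htwo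
        · field_simp
        · field_simp
      · intro w hw
        simp only [Finset.mem_coe, hS3', Finset.mem_filter, Prod.mk.injEq] at hw
        obtain ⟨⟨hGw, hx⟩, hs, ht⟩ := hw
        rw [← div_eq_mul_inv, div_eq_iff hx] at hs ht
        exact Prod.ext rfl (Prod.ext hs.symm ht.symm)
      · intro x hx
        rfl
    rw [hfibx]
    by_cases hP : (s + t + s ^ d + t ^ d + s ^ d * t + s * t ^ d) = 0
    · by_cases hR : ((u₂ + u₃) + (u₁ + u₃) * s + (u₁ + u₂) * t) = 0
      · rw [if_pos hP, if_pos hR]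
        have hset : (Finset.univ.filter fun x : F => x ≠ 0 ∧
            a * x ^ d * (s + t + s ^ d + t ^ d + s ^ d * t + s * t ^ d) = ((u₂ + u₃) + (u₁ + u₃) * s + (u₁ + u₂) * t)) = Finset.univ.filter (fun x : F => x ≠ 0) := by
          apply Finset.filter_congr
          intro x _
          rw [hP, hR, mul_zero]
          simp
        rw [hset, Finset.filter_ne', Finset.card_erase_of_mem (Finset.mem_univ 0),
          Finset.card_univ]
      · rw [if_pos hP, if_neg hR]
        rw [Finset.card_eq_zero, Finset.filter_eq_empty_iff]
        rintro x _ ⟨_, heq⟩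
        rw [hP, mul_zero] at heq
        exact hR heq.symm
    · by_cases hR : ((u₂ + u₃) + (u₁ + u₃) * s + (u₁ + u₂) * t) = 0
      · rw [if_neg hP, if_pos hR]
        rw [Finset.card_eq_zero, Finset.filter_eq_empty_iff]
        rintro x _ ⟨hx0, heq⟩
        rw [hR] at heq
        rcases mul_eq_zero.mp heq with h' | h'
        · rcases mul_eq_zero.mp h' with h'' | h''
          · exact ha h''
          · exact hx0 (pow_eq_zero_iff hd0 |>.mp h'')
        · exact hP h'
      · rw [if_neg hP, if_neg hR]
        have hx0ne : ed.symm (((u₂ + u₃) + (u₁ + u₃) * s + (u₁ + u₂) * t) / (a * (s + t + s ^ d + t ^ d + s ^ d * t + s * t ^ d))) ≠ 0 := by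
          intro h0
          have hvv := hedsymm (((u₂ + u₃) + (u₁ + u₃) * s + (u₁ + u₂) * t) / (a * (s + t + s ^ d + t ^ d + s ^ d * t + s * t ^ d)))
          rw [h0, zero_pow hd0] at hvv
          rw [eq_comm, div_eq_zero_iff] at hvv
          rcases hvv with h' | h'
          · exact hR h'
          · rcases mul_eq_zero.mp h' with h'' | h''
            · exact ha h''
            · exact hP h''
        have hsingle : (Finset.univ.filter fun x : F => x ≠ 0 ∧
            a * x ^ d * (s + t + s ^ d + t ^ d + s ^ d * t + s * t ^ d) = ((u₂ + u₃) + (u₁ + u₃) * s + (u₁ + u₂) * t)) = {ed.symm (((u₂ + u₃) + (u₁ + u₃) * s + (u₁ + u₂) * t) / (a * (s + t + s ^ d + t ^ d + s ^ d * t + s * t ^ d)))} := by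
          ext x
          simp only [Finset.mem_filter, Finset.mem_univ, true_and, Finset.mem_singleton]
          constructor
          · rintro ⟨hx0, heq⟩
            rw [Equiv.eq_symm_apply, hedapp]
            rw [eq_div_iff (mul_ne_zero ha hP)]
            linear_combination heq
          · rintro rfl
            refine ⟨hx0ne, ?_⟩
            rw [hedsymm]
            rw [mul_assoc, div_mul_eq_mul_div, mul_div_assoc', div_eq_iff (mul_ne_zero ha hP)]
            ring
        rw [hsingle, Finset.card_singleton]
  -- summing the fiber counts
  have hA1 : ∑ st ∈ Finset.univ.filter (fun st : F × F => (st.1 + st.2 + st.1 ^ d + st.2 ^ d + st.1 ^ d * st.2 + st.1 * st.2 ^ d) = 0 ∨ ((u₂ + u₃) + (u₁ + u₃) * st.1 + (u₁ + u₂) * st.2) = 0),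
      (if (st.1 + st.2 + st.1 ^ d + st.2 ^ d + st.1 ^ d * st.2 + st.1 * st.2 ^ d) = 0 then (if ((u₂ + u₃) + (u₁ + u₃) * st.1 + (u₁ + u₂) * st.2) = 0 then Fintype.card F - 1 else 0)
       else (if ((u₂ + u₃) + (u₁ + u₃) * st.1 + (u₁ + u₂) * st.2) = 0 then 0 else 1)) = Fintype.card F - 1 := by
    rw [Finset.sum_eq_single_of_mem ((1 : F), (1 : F))]
    · rw [if_pos (hPhiss 1), if_pos hR11]
    · simp only [Finset.mem_filter, Finset.mem_univ, true_and]
      exact Or.inl (hPhiss 1)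
    · intro b hb hbne
      simp only [Finset.mem_filter, Finset.mem_univ, true_and] at hb
      by_cases hPb : (b.1 + b.2 + b.1 ^ d + b.2 ^ d + b.1 ^ d * b.2 + b.1 * b.2 ^ d) = 0
      · by_cases hRb : ((u₂ + u₃) + (u₁ + u₃) * b.1 + (u₁ + u₂) * b.2) = 0
        · obtain ⟨h1, h2⟩ := hZL1 b.1 b.2 hPb hRb
          exact absurd (Prod.ext h1 h2) hbne
        · rw [if_pos hPb, if_neg hRb]
      · rw [if_neg hPb]
        rcases hb with h | h
        · exact absurd h hPb
        · rw [if_pos h]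
  have hA2 : ∑ st ∈ Finset.univ.filter (fun st : F × F => ¬((st.1 + st.2 + st.1 ^ d + st.2 ^ d + st.1 ^ d * st.2 + st.1 * st.2 ^ d) = 0 ∨ ((u₂ + u₃) + (u₁ + u₃) * st.1 + (u₁ + u₂) * st.2) = 0)),
      (if (st.1 + st.2 + st.1 ^ d + st.2 ^ d + st.1 ^ d * st.2 + st.1 * st.2 ^ d) = 0 then (if ((u₂ + u₃) + (u₁ + u₃) * st.1 + (u₁ + u₂) * st.2) = 0 then Fintype.card F - 1 else 0)
       else (if ((u₂ + u₃) + (u₁ + u₃) * st.1 + (u₁ + u₂) * st.2) = 0 then 0 else 1)) =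
      (Finset.univ.filter (fun st : F × F => ¬((st.1 + st.2 + st.1 ^ d + st.2 ^ d + st.1 ^ d * st.2 + st.1 * st.2 ^ d) = 0 ∨ ((u₂ + u₃) + (u₁ + u₃) * st.1 + (u₁ + u₂) * st.2) = 0))).card := by
    rw [Finset.card_eq_sum_ones]
    apply Finset.sum_congr rfl
    intro st hst
    simp only [Finset.mem_filter, Finset.mem_univ, true_and, not_or] at hst
    rw [if_neg hst.1, if_neg hst.2]
  have hJ2 : (S3'.filter fun w => w.1 ≠ 0).card =
      (Finset.univ.filter (fun st : F × F => ¬((st.1 + st.2 + st.1 ^ d + st.2 ^ d + st.1 ^ d * st.2 + st.1 * st.2 ^ d) = 0 ∨ ((u₂ + u₃) + (u₁ + u₃) * st.1 + (u₁ + u₂) * st.2) = 0))).card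
        + (Fintype.card F - 1) := by
    rw [hJ, ← Finset.sum_filter_add_sum_filter_not (Finset.univ : Finset (F × F))
      (fun st : F × F => (st.1 + st.2 + st.1 ^ d + st.2 ^ d + st.1 ^ d * st.2 + st.1 * st.2 ^ d) = 0 ∨ ((u₂ + u₃) + (u₁ + u₃) * st.1 + (u₁ + u₂) * st.2) = 0), hA1, hA2]
    omega
  -- cardinalities of the exceptional sets
  have hZLsplit : (Finset.univ.filter (fun st : F × F => ((st.1 + st.2 + st.1 ^ d + st.2 ^ d + st.1 ^ d * st.2 + st.1 * st.2 ^ d) = 0 ∨ ((u₂ + u₃) + (u₁ + u₃) * st.1 + (u₁ + u₂) * st.2) = 0))).card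
      + (Finset.univ.filter (fun st : F × F => ¬((st.1 + st.2 + st.1 ^ d + st.2 ^ d + st.1 ^ d * st.2 + st.1 * st.2 ^ d) = 0 ∨ ((u₂ + u₃) + (u₁ + u₃) * st.1 + (u₁ + u₂) * st.2) = 0))).card
      = Fintype.card F * Fintype.card F := by
    rw [Finset.card_filter_add_card_filter_not, Finset.card_univ, Fintype.card_prod]
  have hinter : (Finset.univ.filter fun st : F × F => (st.1 + st.2 + st.1 ^ d + st.2 ^ d + st.1 ^ d * st.2 + st.1 * st.2 ^ d) = 0 ∧ ((u₂ + u₃) + (u₁ + u₃) * st.1 + (u₁ + u₂) * st.2) = 0)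
      = {((1 : F), (1 : F))} := by
    ext st
    simp only [Finset.mem_filter, Finset.mem_univ, true_and, Finset.mem_singleton]
    constructor
    · rintro ⟨hPst, hRst⟩
      obtain ⟨h1, h2⟩ := hZL1 st.1 st.2 hPst hRst
      exact Prod.ext h1 h2
    · rintro rfl
      exact ⟨hPhiss 1, hR11⟩
  have hunion : (Finset.univ.filter (fun st : F × F => ((st.1 + st.2 + st.1 ^ d + st.2 ^ d + st.1 ^ d * st.2 + st.1 * st.2 ^ d) = 0 ∨ ((u₂ + u₃) + (u₁ + u₃) * st.1 + (u₁ + u₂) * st.2) = 0))).card + 1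
      = (Finset.univ.filter (fun st : F × F => (st.1 + st.2 + st.1 ^ d + st.2 ^ d + st.1 ^ d * st.2 + st.1 * st.2 ^ d) = 0)).card
        + (Finset.univ.filter (fun st : F × F => ((u₂ + u₃) + (u₁ + u₃) * st.1 + (u₁ + u₂) * st.2) = 0)).card := by
    rw [Finset.filter_or, ← Finset.card_union_add_card_inter]
    congr 1
    rw [← Finset.filter_and, hinter, Finset.card_singleton]
  have hLcard : (Finset.univ.filter (fun st : F × F => ((u₂ + u₃) + (u₁ + u₃) * st.1 + (u₁ + u₂) * st.2) = 0)).card = Fintype.card F := by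
    rw [← Finset.card_univ]
    apply Finset.card_nbij' (fun st => st.1)
      (fun s => (s, ((u₂ + u₃) + (u₁ + u₃) * s) / (u₁ + u₂)))
    · intro st _
      exact Finset.mem_univ _
    · intro s _
      simp only [Finset.mem_coe, Finset.mem_filter, Finset.mem_univ, true_and]
      have h' : (u₁ + u₂) * (((u₂ + u₃) + (u₁ + u₃) * s) / (u₁ + u₂))
          = (u₂ + u₃) + (u₁ + u₃) * s := by
        field_simp
      rw [h']
      exact haddself _
    · intro st hst
      simp only [Finset.mem_coe, Finset.mem_filter, Finset.mem_univ, true_and] at hst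
      have h2nd : ((u₂ + u₃) + (u₁ + u₃) * st.1) / (u₁ + u₂) = st.2 := by
        rw [div_eq_iff heps]
        linear_combination hst - (u₁ + u₂) * st.2 * htwo
      exact Prod.ext rfl h2nd
    · intro s _
      rfl
  have hZcard : (Finset.univ.filter (fun st : F × F => (st.1 + st.2 + st.1 ^ d + st.2 ^ d + st.1 ^ d * st.2 + st.1 * st.2 ^ d) = 0)).card
      = Fintype.card F + 2 * (Fintype.card F - 1) := by
    rw [Finset.card_eq_sum_card_fiberwise (f := fun st : F × F => st.1)
      (t := (Finset.univ : Finset F)) (fun _ _ => Finset.mem_univ _)]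
    rw [← Finset.add_sum_erase _ _ (Finset.mem_univ (1 : F))]
    congr 1
    · rw [← Finset.card_univ]
      apply Finset.card_nbij' (fun st => st.2) (fun t => ((1 : F), t))
      · intro st _
        exact Finset.mem_univ _
      · intro t _
        simp only [Finset.mem_coe, Finset.mem_filter, Finset.mem_univ, true_and]
        exact ⟨hPhi1t t, trivial⟩
      · intro st hst
        simp only [Finset.mem_coe, Finset.mem_filter, Finset.mem_univ, true_and] at hst
        exact Prod.ext hst.2.symm rfl
      · intro t _
        rfl
    · have hfib2 : ∀ s ∈ (Finset.univ : Finset F).erase 1,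
          ((Finset.univ.filter (fun st : F × F => (st.1 + st.2 + st.1 ^ d + st.2 ^ d + st.1 ^ d * st.2 + st.1 * st.2 ^ d) = 0)).filter
            (fun st => st.1 = s)).card = 2 := by
        intro s hs
        have hs1 : s ≠ 1 := (Finset.mem_erase.mp hs).1
        have hset : ((Finset.univ.filter (fun st : F × F => (st.1 + st.2 + st.1 ^ d + st.2 ^ d + st.1 ^ d * st.2 + st.1 * st.2 ^ d) = 0)).filter
            (fun st => st.1 = s)) = {(s, (1 : F)), (s, s)} := by
          ext st
          simp only [Finset.mem_filter, Finset.mem_univ, true_and, Finset.mem_insert,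
            Finset.mem_singleton]
          constructor
          · rintro ⟨hPst, h1⟩
            rcases hPhiChar st.1 st.2 hPst with h | h | h
            · exact absurd (h1.symm.trans h) hs1
            · exact Or.inl (Prod.ext h1 h)
            · exact Or.inr (Prod.ext h1 (h.symm.trans h1))
          · rintro (rfl | rfl)
            · exact ⟨hPhit1 s, rfl⟩
            · exact ⟨hPhiss s, rfl⟩
        rw [hset]
        rw [Finset.card_insert_of_notMem, Finset.card_singleton]
        simp only [Finset.mem_singleton]
        intro h
        exact hs1 ((congrArg Prod.snd h)).symm
      rw [Finset.sum_congr rfl hfib2, Finset.sum_const, smul_eq_mul,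
        Finset.card_erase_of_mem (Finset.mem_univ 1), Finset.card_univ, mul_comm]
  -- ## Final assembly
  rw [hgoalA, ← hq]
  have hqq : Fintype.card F * (Fintype.card F - 4)
      = Fintype.card F * Fintype.card F - 4 * Fintype.card F := by
    have h4 : 4 ≤ Fintype.card F := by omega
    have h4q : 4 * Fintype.card F ≤ Fintype.card F * Fintype.card F :=
      Nat.mul_le_mul_right _ h4
    zify [h4, h4q]
    ring
  rw [hqq]
  have hq8' : 8 ≤ Fintype.card F := by omega
  set QQ := Fintype.card F * Fintype.card F with hQQ
  omega
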